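/- arXiv:1212.0981 — 2 statements merged into one kernel-verified Lean document; each statement's English description precedes it below -/
import Mathlib

section
/- Let φ be a conformal immersion on an open set U ⊆ ℝ² with conformal factor λ, with unit normal n := (φ_u × φ_v)/‖φ_u × φ_v‖ and second fundamental form coefficients L := ⟨φ_uu, n⟩, M := ⟨φ_uv, n⟩, N := ⟨φ_vv, n⟩. Then the Gaussian curvature K := (LN − M²)/λ⁴ satisfies, at every point of U, K = −(1/λ²) Δ(log λ), where Δ := ∂_uu + ∂_vv is the real Laplacian; equivalently, LN − M² = −λ² Δ(log λ) (Gauss's theorema egregium in conformal coordinates, the paper's equation (9) with log λ² = 2 log λ). -/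
open Complex

noncomputable section

/-- Euclidean 3-space. -/
abbrev E3 : Type := EuclideanSpace ℝ (Fin 3)

/-- Partial derivative in the first (u) coordinate direction. -/
def pu {F : Type} [NormedAddCommGroup F] [NormedSpace ℝ F]
    (f : ℝ × ℝ → F) (p : ℝ × ℝ) : F := fderiv ℝ f p (1, 0)

/-- Partial derivative in the second (v) coordinate direction. -/
def pv {F : Type} [NormedAddCommGroup F] [NormedSpace ℝ F]
    (f : ℝ × ℝ → F) (p : ℝ × ℝ) : F := fderiv ℝ f p (0, 1)

/-- Cross product on ℝ³. -/
def cross (a b : E3) : E3 :=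
  (WithLp.equiv 2 (Fin 3 → ℝ)).symm
    ![a 1 * b 2 - a 2 * b 1, a 2 * b 0 - a 0 * b 2, a 0 * b 1 - a 1 * b 0]

/-- The Euclidean inner product on ℝ³. -/
def ip (a b : E3) : ℝ := @inner ℝ _ _ a b

/-- `φ` is a smooth conformal immersion on the open set `U ⊆ ℝ²` with
(smooth, positive) conformal factor `lam`:  ⟨φ_u,φ_u⟩ = λ², ⟨φ_v,φ_v⟩ = λ²,
⟨φ_u,φ_v⟩ = 0 at every point of `U`. -/
def IsConfImm (U : Set (ℝ × ℝ)) (φ : ℝ × ℝ → E3) (lam : ℝ × ℝ → ℝ) : Prop :=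
  IsOpen U ∧ ContDiffOn ℝ (⊤ : ℕ∞) φ U ∧ ContDiffOn ℝ (⊤ : ℕ∞) lam U ∧
    ∀ p ∈ U, 0 < lam p ∧
      ip (pu φ p) (pu φ p) = (lam p) ^ 2 ∧
      ip (pv φ p) (pv φ p) = (lam p) ^ 2 ∧
      ip (pu φ p) (pv φ p) = 0

/-- Complexification ℝ³ ↪ ℂ³. -/
def toC (x : E3) : Fin 3 → ℂ := fun j => (x j : ℂ)

/-- Complex-bilinear dot product on ℂ³:  (a,b) = Σⱼ aⱼ bⱼ. -/
def cdot (a b : Fin 3 → ℂ) : ℂ := ∑ j, a j * b j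

/-- ∂_z = ½(∂_u − i ∂_v) for maps into complex normed spaces. -/
def dz {F : Type} [NormedAddCommGroup F] [NormedSpace ℂ F]
    (f : ℝ × ℝ → F) (p : ℝ × ℝ) : F :=
  (2 : ℂ)⁻¹ • (pu f p - Complex.I • pv f p)

/-- ∂_z̄ = ½(∂_u + i ∂_v) for maps into complex normed spaces. -/
def dzbar {F : Type} [NormedAddCommGroup F] [NormedSpace ℂ F]
    (f : ℝ × ℝ → F) (p : ℝ × ℝ) : F :=
  (2 : ℂ)⁻¹ • (pu f p + Complex.I • pv f p)

/-- `f_z := ½(f_u − i f_v) ∈ ℂ³` for a real-vector-valued map `f` (in particular `φ_z`). -/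
def phiz (f : ℝ × ℝ → E3) (p : ℝ × ℝ) : Fin 3 → ℂ :=
  (2 : ℂ)⁻¹ • (toC (pu f p) - Complex.I • toC (pv f p))

/-- `f_z̄ := ½(f_u + i f_v) ∈ ℂ³` for a real-vector-valued map `f` (in particular `φ_z̄`). -/
def phizbar (f : ℝ × ℝ → E3) (p : ℝ × ℝ) : Fin 3 → ℂ :=
  (2 : ℂ)⁻¹ • (toC (pu f p) + Complex.I • toC (pv f p))

/-- The unit normal n = (φ_u × φ_v)/‖φ_u × φ_v‖. -/
def nvec (φ : ℝ × ℝ → E3) (p : ℝ × ℝ) : E3 :=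
  ‖cross (pu φ p) (pv φ p)‖⁻¹ • cross (pu φ p) (pv φ p)

/-- Componentwise Laplacian Δ = ∂_uu + ∂_vv. -/
def lap {F : Type} [NormedAddCommGroup F] [NormedSpace ℝ F]
    (f : ℝ × ℝ → F) (p : ℝ × ℝ) : F := pu (pu f) p + pv (pv f) p

/-- Mean curvature H = ⟨Δφ, n⟩/(2λ²). -/
def mcurv (φ : ℝ × ℝ → E3) (lam : ℝ × ℝ → ℝ) (p : ℝ × ℝ) : ℝ :=
  ip (lap φ p) (nvec φ p) / (2 * (lam p) ^ 2)

/-- μ := (∂_z φ_z, n). -/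
def muQ (φ : ℝ × ℝ → E3) (p : ℝ × ℝ) : ℂ :=
  cdot (dz (phiz φ) p) (toC (nvec φ p))

lemma ip_eq (a b : E3) : ip a b = a 0 * b 0 + a 1 * b 1 + a 2 * b 2 := by
  simp [ip, PiLp.inner_apply, Fin.sum_univ_three, RCLike.inner_apply]; ring

lemma crossE3_apply (a b : E3) : cross a b 0 = a 1 * b 2 - a 2 * b 1 ∧
    cross a b 1 = a 2 * b 0 - a 0 * b 2 ∧ cross a b 2 = a 0 * b 1 - a 1 * b 0 :=
  ⟨rfl, rfl, rfl⟩

lemma parseval (u v a b : E3) :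
    ip a b * (ip u u * ip v v - ip u v ^ 2) =
      ip a (cross u v) * ip b (cross u v) + ip a u * ip b u * ip v v
        + ip a v * ip b v * ip u u - ip u v * (ip a u * ip b v + ip a v * ip b u) := by
  obtain ⟨h0, h1, h2⟩ := crossE3_apply u v
  simp only [ip_eq, h0, h1, h2]
  ring

lemma lagrange (u v : E3) :
    ip (cross u v) (cross u v) = ip u u * ip v v - ip u v ^ 2 := by
  obtain ⟨h0, h1, h2⟩ := crossE3_apply u v
  simp only [ip_eq, h0, h1, h2]; ring

section calc1
variable {F : Type} [NormedAddCommGroup F] [NormedSpace ℝ F]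
  {U : Set (ℝ × ℝ)} {f : ℝ × ℝ → F} {p : ℝ × ℝ}

lemma contDiffOn_pu (hU : IsOpen U) (hf : ContDiffOn ℝ (⊤ : ℕ∞) f U) :
    ContDiffOn ℝ (⊤ : ℕ∞) (pu f) U := by
  have h := ((contDiffOn_infty_iff_fderiv_of_isOpen hU).1 hf).2
  exact h.clm_apply contDiffOn_const

lemma contDiffOn_pv (hU : IsOpen U) (hf : ContDiffOn ℝ (⊤ : ℕ∞) f U) :
    ContDiffOn ℝ (⊤ : ℕ∞) (pv f) U := by
  have h := ((contDiffOn_infty_iff_fderiv_of_isOpen hU).1 hf).2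
  exact h.clm_apply contDiffOn_const

lemma diffAt (hU : IsOpen U) (hf : ContDiffOn ℝ (⊤ : ℕ∞) f U) (hp : p ∈ U) :
    DifferentiableAt ℝ f p :=
  (hf.contDiffAt (hU.mem_nhds hp)).differentiableAt
    (by simp)

lemma pu_pv_symm (hU : IsOpen U) (hf : ContDiffOn ℝ (⊤ : ℕ∞) f U) (hp : p ∈ U) :
    pu (pv f) p = pv (pu f) p := by
  have hca : ContDiffAt ℝ (⊤ : ℕ∞) f p := hf.contDiffAt (hU.mem_nhds hp)
  have hsym := hca.isSymmSndFDerivAt (by rw [minSmoothness_of_isRCLikeNormedField, show ((2:WithTop ℕ∞)) = ((2:ℕ∞):WithTop ℕ∞) by norm_cast]; exact WithTop.coe_le_coe.mpr le_top)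
  have hd : DifferentiableAt ℝ (fderiv ℝ f) p := by
    have := hca.fderiv_right (m := (⊤ : ℕ∞)) (by exact_mod_cast le_top)
    exact this.differentiableAt (by simp)
  have e1 : pv f = fun q => fderiv ℝ f q (0, 1) := rfl
  have e2 : pu f = fun q => fderiv ℝ f q (1, 0) := rfl
  have h1 : pu (pv f) p = fderiv ℝ (fderiv ℝ f) p (1, 0) (0, 1) := by
    rw [pu, e1, fderiv_clm_apply hd (differentiableAt_const _)]; simp
  have h2 : pv (pu f) p = fderiv ℝ (fderiv ℝ f) p (0, 1) (1, 0) := by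
    rw [pv, e2, fderiv_clm_apply hd (differentiableAt_const _)]; simp
  rw [h1, h2, hsym]

lemma pu_congr {g : ℝ × ℝ → F} (hU : IsOpen U) (hp : p ∈ U)
    (h : ∀ q ∈ U, f q = g q) : pu f p = pu g p := by
  have he : f =ᶠ[nhds p] g := Filter.eventuallyEq_of_mem (hU.mem_nhds hp) h
  simp only [pu, he.fderiv_eq]

lemma pv_congr {g : ℝ × ℝ → F} (hU : IsOpen U) (hp : p ∈ U)
    (h : ∀ q ∈ U, f q = g q) : pv f p = pv g p := by
  have he : f =ᶠ[nhds p] g := Filter.eventuallyEq_of_mem (hU.mem_nhds hp) h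
  simp only [pv, he.fderiv_eq]

end calc1

lemma pu_ip {f g : ℝ × ℝ → E3} {p : ℝ × ℝ} (hf : DifferentiableAt ℝ f p)
    (hg : DifferentiableAt ℝ g p) :
    pu (fun q => ip (f q) (g q)) p = ip (f p) (pu g p) + ip (pu f p) (g p) := by
  simpa [ip, pu] using fderiv_inner_apply (𝕜 := ℝ) hf hg (1, 0)

lemma pv_ip {f g : ℝ × ℝ → E3} {p : ℝ × ℝ} (hf : DifferentiableAt ℝ f p)
    (hg : DifferentiableAt ℝ g p) :
    pv (fun q => ip (f q) (g q)) p = ip (f p) (pv g p) + ip (pv f p) (g p) := by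
  simpa [ip, pv] using fderiv_inner_apply (𝕜 := ℝ) hf hg (0, 1)

lemma pu_mul {f g : ℝ × ℝ → ℝ} {p : ℝ × ℝ} (hf : DifferentiableAt ℝ f p)
    (hg : DifferentiableAt ℝ g p) :
    pu (fun q => f q * g q) p = f p * pu g p + pu f p * g p := by
  simp only [pu, fderiv_fun_mul hf hg]; simp [pu]; ring

lemma pv_mul {f g : ℝ × ℝ → ℝ} {p : ℝ × ℝ} (hf : DifferentiableAt ℝ f p)
    (hg : DifferentiableAt ℝ g p) :
    pv (fun q => f q * g q) p = f p * pv g p + pv f p * g p := by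
  simp only [pv, fderiv_fun_mul hf hg]; simp [pv]; ring

lemma pu_inv {f : ℝ × ℝ → ℝ} {p : ℝ × ℝ} (hf : DifferentiableAt ℝ f p)
    (hne : f p ≠ 0) :
    pu (fun q => (f q)⁻¹) p = -(pu f p) / f p ^ 2 := by
  have h := (hasDerivAt_inv hne).comp_hasFDerivAt p hf.hasFDerivAt
  rw [pu, show (fun q => (f q)⁻¹) = (fun x => x⁻¹) ∘ f from rfl, h.fderiv]
  simp [pu]; ring

lemma pv_inv {f : ℝ × ℝ → ℝ} {p : ℝ × ℝ} (hf : DifferentiableAt ℝ f p)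
    (hne : f p ≠ 0) :
    pv (fun q => (f q)⁻¹) p = -(pv f p) / f p ^ 2 := by
  have h := (hasDerivAt_inv hne).comp_hasFDerivAt p hf.hasFDerivAt
  rw [pv, show (fun q => (f q)⁻¹) = (fun x => x⁻¹) ∘ f from rfl, h.fderiv]
  simp [pv]; ring

lemma pu_log {f : ℝ × ℝ → ℝ} {p : ℝ × ℝ} (hf : DifferentiableAt ℝ f p)
    (hne : f p ≠ 0) :
    pu (fun q => Real.log (f q)) p = (f p)⁻¹ * pu f p := by
  have h := (Real.hasDerivAt_log hne).comp_hasFDerivAt p hf.hasFDerivAt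
  rw [pu, show (fun q => Real.log (f q)) = Real.log ∘ f from rfl, h.fderiv]
  simp [pu]

lemma pv_log {f : ℝ × ℝ → ℝ} {p : ℝ × ℝ} (hf : DifferentiableAt ℝ f p)
    (hne : f p ≠ 0) :
    pv (fun q => Real.log (f q)) p = (f p)⁻¹ * pv f p := by
  have h := (Real.hasDerivAt_log hne).comp_hasFDerivAt p hf.hasFDerivAt
  rw [pv, show (fun q => Real.log (f q)) = Real.log ∘ f from rfl, h.fderiv]
  simp [pv]

lemma ip_comm (a b : E3) : ip a b = ip b a := real_inner_comm b a

lemma pu_zero (q : ℝ × ℝ) : pu (fun _ : ℝ × ℝ => (0 : ℝ)) q = 0 := by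
  simp [pu]

lemma pv_zero (q : ℝ × ℝ) : pv (fun _ : ℝ × ℝ => (0 : ℝ)) q = 0 := by
  simp [pv]

lemma pu_neg {g : ℝ × ℝ → ℝ} (q : ℝ × ℝ) :
    pu (fun r => -(g r)) q = -(pu g q) := by
  simp [pu, fderiv_neg]

lemma pv_neg {g : ℝ × ℝ → ℝ} (q : ℝ × ℝ) :
    pv (fun r => -(g r)) q = -(pv g q) := by
  simp [pv, fderiv_neg]

lemma norm_eq_of_ip {c : E3} {l : ℝ} (hl : 0 ≤ l) (h : ip c c = l ^ 2) : ‖c‖ = l := by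
  have h1 : ip c c = ‖c‖ ^ 2 := real_inner_self_eq_norm_sq c
  have h2 : ‖c‖ ^ 2 = l ^ 2 := by rw [← h1, h]
  calc ‖c‖ = Real.sqrt (‖c‖ ^ 2) := (Real.sqrt_sq (norm_nonneg c)).symm
    _ = Real.sqrt (l ^ 2) := by rw [h2]
    _ = l := Real.sqrt_sq hl
/-- theorema egregium in conformal coordinates:
K = −(1/λ²) Δ(log λ), equivalently LN − M² = −λ² Δ(log λ). -/
theorem conformal_gaussian_curvature_formula
    (U : Set (ℝ × ℝ)) (φ : ℝ × ℝ → E3) (lam : ℝ × ℝ → ℝ)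
    (h : IsConfImm U φ lam) :
    ∀ p ∈ U,
      (ip (pu (pu φ) p) (nvec φ p) * ip (pv (pv φ) p) (nvec φ p)
          - ip (pu (pv φ) p) (nvec φ p) ^ 2) / (lam p) ^ 4
        = -(1 / (lam p) ^ 2) * lap (fun q => Real.log (lam q)) p ∧
      ip (pu (pu φ) p) (nvec φ p) * ip (pv (pv φ) p) (nvec φ p)
          - ip (pu (pv φ) p) (nvec φ p) ^ 2
        = -((lam p) ^ 2) * lap (fun q => Real.log (lam q)) p := by
  obtain ⟨hU, hφ, hlam, hpt⟩ := h
  have hlamne : ∀ q ∈ U, lam q ≠ 0 := fun q hq => ne_of_gt (hpt q hq).1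
  have hφu : ContDiffOn ℝ (⊤:ℕ∞) (pu φ) U := contDiffOn_pu hU hφ
  have hφv : ContDiffOn ℝ (⊤:ℕ∞) (pv φ) U := contDiffOn_pv hU hφ
  have dlam : ∀ q ∈ U, DifferentiableAt ℝ lam q := fun q hq => diffAt hU hlam hq
  have dpul : ∀ q ∈ U, DifferentiableAt ℝ (pu lam) q :=
    fun q hq => diffAt hU (contDiffOn_pu hU hlam) hq
  have dpvl : ∀ q ∈ U, DifferentiableAt ℝ (pv lam) q :=
    fun q hq => diffAt hU (contDiffOn_pv hU hlam) hq
  have dpuφ : ∀ q ∈ U, DifferentiableAt ℝ (pu φ) q := fun q hq => diffAt hU hφu hq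
  have dpvφ : ∀ q ∈ U, DifferentiableAt ℝ (pv φ) q := fun q hq => diffAt hU hφv hq
  have dpuuφ : ∀ q ∈ U, DifferentiableAt ℝ (pu (pu φ)) q :=
    fun q hq => diffAt hU (contDiffOn_pu hU hφu) hq
  have dpuvφ : ∀ q ∈ U, DifferentiableAt ℝ (pu (pv φ)) q :=
    fun q hq => diffAt hU (contDiffOn_pu hU hφv) hq
  have symm_q : ∀ q ∈ U, pu (pv φ) q = pv (pu φ) q := fun q hq => pu_pv_symm hU hφ hq
  -- first derivatives of the metric identities
  have kE_u : ∀ q ∈ U, ip (pu (pu φ) q) (pu φ q) = lam q * pu lam q := by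
    intro q hq
    have h1 : pu (fun r => ip (pu φ r) (pu φ r)) q = pu (fun r => lam r * lam r) q :=
      pu_congr hU hq (fun r hr => by rw [(hpt r hr).2.1]; ring)
    rw [pu_ip (dpuφ q hq) (dpuφ q hq), pu_mul (dlam q hq) (dlam q hq)] at h1
    have h2 : ip (pu φ q) (pu (pu φ) q) = ip (pu (pu φ) q) (pu φ q) := ip_comm _ _
    linarith
  have kE_v : ∀ q ∈ U, ip (pv (pu φ) q) (pu φ q) = lam q * pv lam q := by
    intro q hq
    have h1 : pv (fun r => ip (pu φ r) (pu φ r)) q = pv (fun r => lam r * lam r) q :=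
      pv_congr hU hq (fun r hr => by rw [(hpt r hr).2.1]; ring)
    rw [pv_ip (dpuφ q hq) (dpuφ q hq), pv_mul (dlam q hq) (dlam q hq)] at h1
    have h2 : ip (pu φ q) (pv (pu φ) q) = ip (pv (pu φ) q) (pu φ q) := ip_comm _ _
    linarith
  have kG_u : ∀ q ∈ U, ip (pu (pv φ) q) (pv φ q) = lam q * pu lam q := by
    intro q hq
    have h1 : pu (fun r => ip (pv φ r) (pv φ r)) q = pu (fun r => lam r * lam r) q :=
      pu_congr hU hq (fun r hr => by rw [(hpt r hr).2.2.1]; ring)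
    rw [pu_ip (dpvφ q hq) (dpvφ q hq), pu_mul (dlam q hq) (dlam q hq)] at h1
    have h2 : ip (pv φ q) (pu (pv φ) q) = ip (pu (pv φ) q) (pv φ q) := ip_comm _ _
    linarith
  have kG_v : ∀ q ∈ U, ip (pv (pv φ) q) (pv φ q) = lam q * pv lam q := by
    intro q hq
    have h1 : pv (fun r => ip (pv φ r) (pv φ r)) q = pv (fun r => lam r * lam r) q :=
      pv_congr hU hq (fun r hr => by rw [(hpt r hr).2.2.1]; ring)
    rw [pv_ip (dpvφ q hq) (dpvφ q hq), pv_mul (dlam q hq) (dlam q hq)] at h1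
    have h2 : ip (pv φ q) (pv (pv φ) q) = ip (pv (pv φ) q) (pv φ q) := ip_comm _ _
    linarith
  have kF_u : ∀ q ∈ U, ip (pu (pu φ) q) (pv φ q) = -(lam q * pv lam q) := by
    intro q hq
    have h1 : pu (fun r => ip (pu φ r) (pv φ r)) q = pu (fun _ => (0:ℝ)) q :=
      pu_congr hU hq (fun r hr => by rw [(hpt r hr).2.2.2])
    rw [pu_ip (dpuφ q hq) (dpvφ q hq), pu_zero] at h1
    have h2 : ip (pu φ q) (pu (pv φ) q) = lam q * pv lam q := by
      rw [symm_q q hq, ip_comm]; exact kE_v q hq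
    linarith
  have kF_v : ∀ q ∈ U, ip (pu φ q) (pv (pv φ) q) = -(lam q * pu lam q) := by
    intro q hq
    have h1 : pv (fun r => ip (pu φ r) (pv φ r)) q = pv (fun _ => (0:ℝ)) q :=
      pv_congr hU hq (fun r hr => by rw [(hpt r hr).2.2.2])
    rw [pv_ip (dpuφ q hq) (dpvφ q hq), pv_zero] at h1
    have h2 : ip (pv (pu φ) q) (pv φ q) = lam q * pu lam q := by
      rw [← symm_q q hq]; exact kG_u q hq
    linarith
  -- log lambda first derivatives on U
  have hlog_u : ∀ q ∈ U, pu (fun r => Real.log (lam r)) q = (lam q)⁻¹ * pu lam q :=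
    fun q hq => pu_log (dlam q hq) (hlamne q hq)
  have hlog_v : ∀ q ∈ U, pv (fun r => Real.log (lam r)) q = (lam q)⁻¹ * pv lam q :=
    fun q hq => pv_log (dlam q hq) (hlamne q hq)
  intro p hp
  obtain ⟨hl0, hE, hG, hF⟩ := hpt p hp
  have hlne : lam p ≠ 0 := ne_of_gt hl0
  -- third-derivative identities
  have h7a : ip (pu (pu φ) p) (pv (pv φ) p) + ip (pv (pu (pu φ)) p) (pv φ p)
      = -(lam p * pv (pv lam) p + pv lam p * pv lam p) := by
    have e1 : pv (fun q => ip (pu (pu φ) q) (pv φ q)) p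
        = pv (fun q => -(lam q * pv lam q)) p :=
      pv_congr hU hp (fun r hr => by rw [kF_u r hr])
    rw [pv_ip (dpuuφ p hp) (dpvφ p hp), pv_neg,
      pv_mul (dlam p hp) (dpvl p hp)] at e1
    linarith
  have h7b : ip (pu (pv φ) p) (pu (pv φ) p) + ip (pu (pu (pv φ)) p) (pv φ p)
      = lam p * pu (pu lam) p + pu lam p * pu lam p := by
    have e1 : pu (fun q => ip (pu (pv φ) q) (pv φ q)) p
        = pu (fun q => lam q * pu lam q) p :=
      pu_congr hU hp (fun r hr => kG_u r hr)
    rw [pu_ip (dpuvφ p hp) (dpvφ p hp), pu_mul (dlam p hp) (dpul p hp)] at e1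
    linarith
  have h7c : pv (pu (pu φ)) p = pu (pu (pv φ)) p := by
    have e1 : pu (pv (pu φ)) p = pv (pu (pu φ)) p := pu_pv_symm hU hφu hp
    have e2 : pu (pv (pu φ)) p = pu (pu (pv φ)) p :=
      pu_congr hU hp (fun r hr => (symm_q r hr).symm)
    rw [← e1, e2]
  have hab : ip (pu (pu φ) p) (pv (pv φ) p) - ip (pu (pv φ) p) (pu (pv φ) p)
      = -(lam p * pv (pv lam) p + pv lam p * pv lam p)
        - (lam p * pu (pu lam) p + pu lam p * pu lam p) := by
    rw [h7c] at h7a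
    linarith
  -- Parseval-type identities
  have kbu : ip (pv (pv φ) p) (pu φ p) = -(lam p * pu lam p) := by
    rw [ip_comm]; exact kF_v p hp
  have kmu : ip (pu (pv φ) p) (pu φ p) = lam p * pv lam p := by
    rw [symm_q p hp]; exact kE_v p hp
  have hP1 := parseval (pu φ p) (pv φ p) (pu (pu φ) p) (pv (pv φ) p)
  rw [hE, hG, hF, kE_u p hp, kbu, kF_u p hp, kG_v p hp] at hP1
  have hP2 := parseval (pu φ p) (pv φ p) (pu (pv φ) p) (pu (pv φ) p)
  rw [hE, hG, hF, kmu, kG_u p hp] at hP2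
  -- the unit normal
  have hcc : ip (cross (pu φ p) (pv φ p)) (cross (pu φ p) (pv φ p)) = (lam p ^ 2) ^ 2 := by
    rw [lagrange, hE, hG, hF]; ring
  have hnc : ‖cross (pu φ p) (pv φ p)‖ = lam p ^ 2 :=
    norm_eq_of_ip (sq_nonneg _) hcc
  have hnv : ∀ x : E3, ip x (nvec φ p)
      = (lam p ^ 2)⁻¹ * ip x (cross (pu φ p) (pv φ p)) := by
    intro x
    rw [show nvec φ p = ‖cross (pu φ p) (pv φ p)‖⁻¹ • cross (pu φ p) (pv φ p) from rfl,
      hnc]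
    exact real_inner_smul_right x (cross (pu φ p) (pv φ p)) _
  -- the scalar curvature identity
  have e1 : ip (pu (pu φ) p) (nvec φ p) * ip (pv (pv φ) p) (nvec φ p)
      - ip (pu (pv φ) p) (nvec φ p) ^ 2
      = pu lam p * pu lam p + pv lam p * pv lam p
        - lam p * (pu (pu lam) p + pv (pv lam) p) := by
    have h8 : ip (pu (pu φ) p) (cross (pu φ p) (pv φ p))
          * ip (pv (pv φ) p) (cross (pu φ p) (pv φ p))
        - ip (pu (pv φ) p) (cross (pu φ p) (pv φ p)) ^ 2
        = (lam p) ^ 4 * (pu lam p * pu lam p + pv lam p * pv lam p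
            - lam p * (pu (pu lam) p + pv (pv lam) p)) := by
      linear_combination (-1 : ℝ) * hP1 + hP2 + (lam p) ^ 4 * hab
    rw [hnv, hnv, hnv]
    have h4 : (lam p ^ 2) ≠ 0 := pow_ne_zero 2 hlne
    field_simp
    linear_combination h8
  -- the Laplacian of log lambda
  have hlap_u : pu (pu (fun r => Real.log (lam r))) p
      = (lam p)⁻¹ * pu (pu lam) p + (-(pu lam p) / lam p ^ 2) * pu lam p := by
    have e2 : pu (pu (fun r => Real.log (lam r))) p
        = pu (fun q => (lam q)⁻¹ * pu lam q) p := pu_congr hU hp hlog_u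
    rw [e2, pu_mul (show DifferentiableAt ℝ (fun q => (lam q)⁻¹) p from (dlam p hp).inv hlne) (dpul p hp), pu_inv (dlam p hp) hlne]
  have hlap_v : pv (pv (fun r => Real.log (lam r))) p
      = (lam p)⁻¹ * pv (pv lam) p + (-(pv lam p) / lam p ^ 2) * pv lam p := by
    have e2 : pv (pv (fun r => Real.log (lam r))) p
        = pv (fun q => (lam q)⁻¹ * pv lam q) p := pv_congr hU hp hlog_v
    rw [e2, pv_mul (show DifferentiableAt ℝ (fun q => (lam q)⁻¹) p from (dlam p hp).inv hlne) (dpvl p hp), pv_inv (dlam p hp) hlne]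
  have hlap : lap (fun q => Real.log (lam q)) p
      = (lam p)⁻¹ * pu (pu lam) p + (-(pu lam p) / lam p ^ 2) * pu lam p
        + ((lam p)⁻¹ * pv (pv lam) p + (-(pv lam p) / lam p ^ 2) * pv lam p) := by
    rw [show lap (fun q => Real.log (lam q)) p
        = pu (pu (fun q => Real.log (lam q))) p
          + pv (pv (fun q => Real.log (lam q))) p from rfl, hlap_u, hlap_v]
  constructor
  · rw [e1, hlap]
    field_simp
    ring
  · rw [e1, hlap]
    field_simp
    ring
end
end

section
/- Let φ be a conformal immersion on an open set U ⊆ ℝ² with conformal factor λ, with unit normal n := (φ_u × φ_v)/‖φ_u × φ_v‖, second fundamental form coefficients L := ⟨φ_uu, n⟩, M := ⟨φ_uv, n⟩, N := ⟨φ_vv, n⟩, mean curvature H := (L + N)/(2λ²), Gaussian curvature K := (LN − M²)/λ⁴, and μ := (∂_z φ_z, n). Then at every point of U, |μ|² = (λ⁴/4)(H² − K); in particular H² ≥ K on U. -/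
open Complex

noncomputable section

/-- `toC` as a continuous linear map. -/
def Lc : E3 →L[ℝ] (Fin 3 → ℂ) :=
  ContinuousLinearMap.pi fun j => Complex.ofRealCLM.comp (EuclideanSpace.proj j)

lemma Lc_apply (x : E3) : Lc x = toC x := rfl

lemma dz_phiz {U : Set (ℝ × ℝ)} {φ : ℝ × ℝ → E3} (hU : IsOpen U)
    (hφ : ContDiffOn ℝ (⊤ : ℕ∞) φ U) {p : ℝ × ℝ} (hp : p ∈ U) :
    dz (phiz φ) p
      = (4 : ℂ)⁻¹ • (toC (pu (pu φ) p) - toC (pv (pv φ) p)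
          - (2 * Complex.I) • toC (pu (pv φ) p)) := by
  have hf' : ContDiffOn ℝ (⊤ : ℕ∞) (fderiv ℝ φ) U :=
    hφ.fderiv_of_isOpen hU (m := (⊤ : ℕ∞)) (by norm_num)
  have hf'p : ContDiffAt ℝ (⊤ : ℕ∞) (fderiv ℝ φ) p := hf'.contDiffAt (hU.mem_nhds hp)
  have hdiff : DifferentiableAt ℝ (fderiv ℝ φ) p := hf'p.differentiableAt (by decide)
  set D := fderiv ℝ (fderiv ℝ φ) p with hD
  have hpw : ∀ w : ℝ × ℝ, HasFDerivAt (fun q => fderiv ℝ φ q w)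
      ((ContinuousLinearMap.apply ℝ E3 w).comp D) p :=
    fun w => (ContinuousLinearMap.apply ℝ E3 w).hasFDerivAt.comp p hdiff.hasFDerivAt
  have h1 : HasFDerivAt (pu φ) ((ContinuousLinearMap.apply ℝ E3 (1,0)).comp D) p := hpw (1,0)
  have h2 : HasFDerivAt (pv φ) ((ContinuousLinearMap.apply ℝ E3 (0,1)).comp D) p := hpw (0,1)
  have hA : HasFDerivAt (fun q => Lc (pu φ q))
      (Lc.comp ((ContinuousLinearMap.apply ℝ E3 (1,0)).comp D)) p := Lc.hasFDerivAt.comp p h1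
  have hB : HasFDerivAt (fun q => Lc (pv φ q))
      (Lc.comp ((ContinuousLinearMap.apply ℝ E3 (0,1)).comp D)) p := Lc.hasFDerivAt.comp p h2
  have hE := ((hA.sub (hB.const_smul Complex.I)).const_smul ((2:ℂ)⁻¹))
  have heq : (fun q => (2:ℂ)⁻¹ • (Lc (pu φ q) - Complex.I • Lc (pv φ q))) = phiz φ := by
    funext q; simp [phiz, ← Lc_apply]
  replace hE : HasFDerivAt (phiz φ) ((2:ℂ)⁻¹ • (Lc.comp ((ContinuousLinearMap.apply ℝ E3 (1,0)).comp D) - Complex.I • Lc.comp ((ContinuousLinearMap.apply ℝ E3 (0,1)).comp D))) p := by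
    rw [← heq]; exact hE
  have hsymm : D (0,1) (1,0) = D (1,0) (0,1) :=
    (hφ.contDiffAt (hU.mem_nhds hp)).isSymmSndFDerivAt (by rw [minSmoothness_of_isRCLikeNormedField]; exact WithTop.coe_le_coe.mpr le_top) _ _
  have hpuu : pu (pu φ) p = D (1,0) (1,0) := by
    simp [pu, h1.fderiv]
  have hpuv : pu (pv φ) p = D (1,0) (0,1) := by
    simp [pu, pv, h2.fderiv]
  have hpvv : pv (pv φ) p = D (0,1) (0,1) := by
    simp [pv, h2.fderiv]
  have hu : pu (phiz φ) p = (2:ℂ)⁻¹ • (toC (D (1,0) (1,0)) - Complex.I • toC (D (1,0) (0,1))) := by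
    rw [pu, hE.fderiv]; simp [Lc_apply]
  have hv : pv (phiz φ) p = (2:ℂ)⁻¹ • (toC (D (0,1) (1,0)) - Complex.I • toC (D (0,1) (0,1))) := by
    rw [pv, hE.fderiv]; simp [Lc_apply]
  rw [dz, hu, hv, hpuu, hpvv, hpuv, hsymm]
  funext j
  simp only [Pi.smul_apply, Pi.sub_apply, smul_eq_mul]
  ring_nf
  simp [Complex.I_sq]
  ring_nf

lemma mu_eq {U : Set (ℝ × ℝ)} {φ : ℝ × ℝ → E3} (hU : IsOpen U)
    (hφ : ContDiffOn ℝ (⊤ : ℕ∞) φ U) {p : ℝ × ℝ} (hp : p ∈ U) :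
    muQ φ p = (4:ℂ)⁻¹ * (((ip (pu (pu φ) p) (nvec φ p) : ℝ) : ℂ)
      - ((ip (pv (pv φ) p) (nvec φ p) : ℝ) : ℂ)
      - 2 * Complex.I * ((ip (pu (pv φ) p) (nvec φ p) : ℝ) : ℂ)) := by
  rw [muQ, dz_phiz hU hφ hp]
  simp only [cdot, toC, ip, PiLp.inner_apply, RCLike.inner_apply, conj_trivial,
    Fin.sum_univ_three, Pi.smul_apply, Pi.sub_apply, smul_eq_mul]
  push_cast
  ring

/-- |μ|² = (λ⁴/4)(H² − K); in particular H² ≥ K, where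
L, M, N are the second fundamental form coefficients, H = (L+N)/(2λ²) and
K = (LN − M²)/λ⁴. -/
theorem conformal_mu_norm_squared
    (U : Set (ℝ × ℝ)) (φ : ℝ × ℝ → E3) (lam : ℝ × ℝ → ℝ)
    (h : IsConfImm U φ lam) :
    ∀ p ∈ U,
      ‖muQ φ p‖ ^ 2
        = (lam p) ^ 4 / 4
            * (((ip (pu (pu φ) p) (nvec φ p) + ip (pv (pv φ) p) (nvec φ p))
                  / (2 * (lam p) ^ 2)) ^ 2
               - (ip (pu (pu φ) p) (nvec φ p) * ip (pv (pv φ) p) (nvec φ p)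
                    - ip (pu (pv φ) p) (nvec φ p) ^ 2) / (lam p) ^ 4) ∧
      (ip (pu (pu φ) p) (nvec φ p) * ip (pv (pv φ) p) (nvec φ p)
          - ip (pu (pv φ) p) (nvec φ p) ^ 2) / (lam p) ^ 4
        ≤ ((ip (pu (pu φ) p) (nvec φ p) + ip (pv (pv φ) p) (nvec φ p))
              / (2 * (lam p) ^ 2)) ^ 2 := by
  obtain ⟨hU, hφ, hlam, hpts⟩ := h
  intro p hp
  obtain ⟨hl, -, -, -⟩ := hpts p hp
  set n := nvec φ p with hn
  set L := ip (pu (pu φ) p) n with hL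
  set N := ip (pv (pv φ) p) n with hN
  set M := ip (pu (pv φ) p) n with hM
  have h0 : lam p ≠ 0 := ne_of_gt hl
  have habs : ‖muQ φ p‖ ^ 2 = ((L - N)^2 + 4 * M^2) / 16 := by
    rw [mu_eq hU hφ hp, Complex.sq_norm, Complex.normSq_apply]
    simp only [← hn, ← hL, ← hN, ← hM, Complex.mul_re, Complex.mul_im, Complex.sub_re,
      Complex.sub_im, Complex.inv_re, Complex.inv_im, Complex.I_re, Complex.I_im,
      Complex.ofReal_re, Complex.ofReal_im, Complex.normSq_ofNat, Complex.re_ofNat,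
      Complex.im_ofNat, Complex.normSq_apply]
    ring
  constructor
  · rw [habs]
    field_simp
    ring
  · have key : 0 ≤ (lam p)^4 * ((L - N)^2 + 4 * M^2) := by positivity
    rw [div_pow, div_le_div_iff₀ (by positivity) (by positivity)]
    nlinarith [key]
end
end
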